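/- Let α_j(ω), j ≥ 0, be independent complex Gaussian random variables with α_j ~ N(0, (h^m σ_j)^2), where σ_j ≤ C μ_j^{-ρ}, μ_j ≥ μ_0 > 0, the counting function of (μ_j) satisfies N(μ) ≍ μ^n, and n/2 < s < ρ - n/2. Then there is a constant C' > 0, independent of h ∈ (0,1], such that P( Σ_j μ_j^{2s} |α_j|^2 ≥ h^2 ) ≤ exp( C' - h^{-2(m-1)} / (2 C') ). -/

import Mathlib

open MeasureTheory ProbabilityTheory Set
open scoped NNReal

noncomputable def complexGaussian (v : ℝ≥0) : Measure ℂ :=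
  ((gaussianReal 0 (v / 2)).prod (gaussianReal 0 (v / 2))).map
    (fun p : ℝ × ℝ => ⟨p.1, p.2⟩)

def IsIndepComplexGaussianFamily {Ω : Type*} [MeasurableSpace Ω] (P : Measure Ω)
    {ι : Type*} (d : ι → Ω → ℂ) (σ : ι → ℝ≥0) : Prop :=
  iIndepFun d P ∧
    ∀ j, Measure.map (d j) P = complexGaussian ((σ j) ^ 2)

section Aux
open Real
open scoped ENNReal Nat


lemma gauss_tail (w : ℝ≥0) (a : ℝ) :
    gaussianReal 0 w {x | a ≤ x ^ 2} ≤ ENNReal.ofReal (Real.sqrt 2 * Real.exp (-(a / (4 * w)))) := by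
  have hs2 : (1:ℝ) ≤ Real.sqrt 2 := by
    rw [show (1:ℝ) = Real.sqrt 1 by simp]
    exact Real.sqrt_le_sqrt (by norm_num)
  rcases eq_or_ne w 0 with hw | hw
  · subst hw
    calc gaussianReal 0 0 {x | a ≤ x ^ 2} ≤ 1 := prob_le_one
    _ ≤ ENNReal.ofReal (Real.sqrt 2 * Real.exp (-(a / (4 * ((0:ℝ≥0):ℝ))))) := by
        rw [ENNReal.one_le_ofReal]
        simp only [NNReal.coe_zero, mul_zero, div_zero, neg_zero, Real.exp_zero, mul_one]
        exact hs2
  · have hw' : (0:ℝ) < (w:ℝ) := NNReal.coe_pos.mpr (pos_iff_ne_zero.mpr hw)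
    have hb : (0:ℝ) < 1 / (4 * w) := by positivity
    set K : ℝ := Real.exp (-(a / (4 * w))) with hK
    have hK0 : 0 < K := Real.exp_pos _
    set c : ℝ := (Real.sqrt (2 * π * w))⁻¹ with hc
    have hc0 : 0 < c := by
      rw [hc]
      have : (0:ℝ) < 2 * π * w := by positivity
      positivity
    rw [gaussianReal_apply 0 hw]
    have hpt : ∀ x ∈ {x : ℝ | a ≤ x ^ 2}, gaussianPDF 0 w x ≤
        ENNReal.ofReal (K * (c * Real.exp (-(1 / (4 * w)) * x ^ 2))) := by
      intro x hx
      simp only [Set.mem_setOf_eq] at hx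
      rw [gaussianPDF_def]
      apply ENNReal.ofReal_le_ofReal
      rw [gaussianPDFReal_def]
      simp only [sub_zero]
      rw [show K * (c * Real.exp (-(1 / (4 * w)) * x ^ 2))
          = c * (K * Real.exp (-(1 / (4 * w)) * x ^ 2)) by ring]
      refine mul_le_mul_of_nonneg_left ?_ hc0.le
      rw [← Real.exp_add]
      apply Real.exp_le_exp.mpr
      have h1 : -x ^ 2 / (2 * (w:ℝ)) = -(x^2 / (4*w)) + -(1/(4*w)) * x^2 := by
        field_simp; ring
      rw [h1]
      have h2 : a / (4*(w:ℝ)) ≤ x^2 / (4*w) := by gcongr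
      linarith
    have hmeas : Measurable fun x : ℝ => ENNReal.ofReal (K * (c * Real.exp (-(1 / (4 * (w:ℝ))) * x ^ 2))) := by
      apply Measurable.ennreal_ofReal
      fun_prop
    have hint : Integrable (fun x : ℝ => K * (c * Real.exp (-(1 / (4 * (w:ℝ))) * x ^ 2))) := by
      exact ((integrable_exp_neg_mul_sq hb).const_mul c).const_mul K
    calc ∫⁻ x in {x : ℝ | a ≤ x ^ 2}, gaussianPDF 0 w x
        ≤ ∫⁻ x in {x : ℝ | a ≤ x ^ 2},
            ENNReal.ofReal (K * (c * Real.exp (-(1 / (4 * (w:ℝ))) * x ^ 2))) :=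
          setLIntegral_mono hmeas hpt
      _ ≤ ∫⁻ x, ENNReal.ofReal (K * (c * Real.exp (-(1 / (4 * (w:ℝ))) * x ^ 2))) :=
          setLIntegral_le_lintegral _ _
      _ = ENNReal.ofReal (∫ x, K * (c * Real.exp (-(1 / (4 * (w:ℝ))) * x ^ 2))) := by
          rw [ofReal_integral_eq_lintegral_ofReal hint]
          filter_upwards with x
          positivity
      _ = ENNReal.ofReal (Real.sqrt 2 * K) := by
          congr 1
          rw [integral_const_mul, integral_const_mul, integral_gaussian]
          have h4 : π / (1 / (4 * (w:ℝ))) = 2 * (2 * π * w) := by field_simp; ring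
          rw [h4, Real.sqrt_mul (by norm_num : (0:ℝ) ≤ 2)]
          have hne : Real.sqrt (2 * π * w) ≠ 0 := by
            have : (0:ℝ) < 2 * π * w := by positivity
            positivity
          rw [hc]
          field_simp

lemma complexGaussian_mk_measurable : Measurable (fun p : ℝ × ℝ => (⟨p.1, p.2⟩ : ℂ)) := by
  have : (fun p : ℝ × ℝ => (⟨p.1, p.2⟩ : ℂ)) = (Complex.measurableEquivRealProd.symm : ℝ × ℝ → ℂ) := by
    funext p; rfl
  rw [this]
  exact Complex.measurableEquivRealProd.symm.measurable

instance complexGaussian_isProb (v : ℝ≥0) : IsProbabilityMeasure (complexGaussian v) := by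
  unfold complexGaussian
  exact MeasureTheory.Measure.isProbabilityMeasure_map complexGaussian_mk_measurable.aemeasurable

lemma complexGaussian_tail (v : ℝ≥0) (u : ℝ) :
    complexGaussian v {z : ℂ | u ≤ ‖z‖ ^ 2} ≤
      ENNReal.ofReal (2 * Real.sqrt 2 * Real.exp (-(u / (4 * v)))) := by
  have hS : MeasurableSet {z : ℂ | u ≤ ‖z‖ ^ 2} :=
    (isClosed_le continuous_const ((continuous_norm).pow 2)).measurableSet
  have hcoe : ((v / 2 : ℝ≥0) : ℝ) = (v : ℝ) / 2 := by push_cast; ring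
  set g := gaussianReal 0 (v / 2)
  have hpre : (fun p : ℝ × ℝ => (⟨p.1, p.2⟩ : ℂ)) ⁻¹' {z : ℂ | u ≤ ‖z‖ ^ 2}
      ⊆ ({x : ℝ | u / 2 ≤ x ^ 2} ×ˢ univ) ∪ (univ ×ˢ {y : ℝ | u / 2 ≤ y ^ 2}) := by
    intro p hp
    simp only [Set.mem_preimage, Set.mem_setOf_eq] at hp
    have hnorm : ‖(⟨p.1, p.2⟩ : ℂ)‖ ^ 2 = p.1 ^ 2 + p.2 ^ 2 := by
      rw [Complex.sq_norm, Complex.normSq_mk]; ring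
    rw [hnorm] at hp
    rcases le_total (u/2) (p.1 ^ 2) with h | h
    · exact Or.inl ⟨h, Set.mem_univ _⟩
    · exact Or.inr ⟨Set.mem_univ _, by simp only [Set.mem_setOf_eq]; nlinarith⟩
  calc complexGaussian v {z : ℂ | u ≤ ‖z‖ ^ 2}
      = (g.prod g) ((fun p : ℝ × ℝ => (⟨p.1, p.2⟩ : ℂ)) ⁻¹' {z : ℂ | u ≤ ‖z‖ ^ 2}) := by
        unfold complexGaussian
        rw [Measure.map_apply complexGaussian_mk_measurable hS]
    _ ≤ (g.prod g) (({x : ℝ | u / 2 ≤ x ^ 2} ×ˢ univ) ∪ (univ ×ˢ {y : ℝ | u / 2 ≤ y ^ 2})) :=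
        measure_mono hpre
    _ ≤ (g.prod g) ({x : ℝ | u / 2 ≤ x ^ 2} ×ˢ univ) + (g.prod g) (univ ×ˢ {y : ℝ | u / 2 ≤ y ^ 2}) :=
        measure_union_le _ _
    _ = g {x : ℝ | u / 2 ≤ x ^ 2} + g {y : ℝ | u / 2 ≤ y ^ 2} := by
        rw [Measure.prod_prod, Measure.prod_prod, measure_univ, mul_one, one_mul]
    _ ≤ ENNReal.ofReal (Real.sqrt 2 * Real.exp (-(u / 2 / (4 * ((v:ℝ)/2))))) +
        ENNReal.ofReal (Real.sqrt 2 * Real.exp (-(u / 2 / (4 * ((v:ℝ)/2))))) := by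
        have := gauss_tail (v/2) (u/2)
        rw [hcoe] at this
        exact add_le_add this this
    _ = ENNReal.ofReal (2 * Real.sqrt 2 * Real.exp (-(u / (4 * v)))) := by
        rw [← ENNReal.ofReal_add (by positivity) (by positivity)]
        congr 1
        have : u / 2 / (4 * ((v:ℝ)/2)) = u / (4 * v) := by
          rw [div_div]
          congr 1
          ring
        rw [this]; ring

lemma complexGaussian_zero_tail (u : ℝ) (hu : 0 < u) :
    complexGaussian 0 {z : ℂ | u ≤ ‖z‖ ^ 2} = 0 := by
  have hS : MeasurableSet {z : ℂ | u ≤ ‖z‖ ^ 2} :=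
    (isClosed_le continuous_const ((continuous_norm).pow 2)).measurableSet
  unfold complexGaussian
  rw [Measure.map_apply complexGaussian_mk_measurable hS]
  have h0 : ((0:ℝ≥0)/2) = 0 := by simp
  rw [h0, gaussianReal_zero_var, Measure.dirac_prod_dirac, Measure.dirac_apply' _ (hS.preimage complexGaussian_mk_measurable)]
  have : ((0:ℝ),(0:ℝ)) ∉ (fun p : ℝ × ℝ => (⟨p.1, p.2⟩ : ℂ)) ⁻¹' {z : ℂ | u ≤ ‖z‖ ^ 2} := by
    simp only [Set.mem_preimage, Set.mem_setOf_eq]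
    intro h
    have : ‖(⟨(0:ℝ), (0:ℝ)⟩ : ℂ)‖ = 0 := by
      have : (⟨(0:ℝ), (0:ℝ)⟩ : ℂ) = 0 := Complex.ext rfl rfl
      rw [this, norm_zero]
    rw [this] at h
    nlinarith
  rw [Set.indicator_of_notMem this]


lemma shell_bound (n : ℕ) (μ : ℕ → ℝ) (μ₀ c₂ : ℝ) (hμ₀ : 0 < μ₀) (hμ : ∀ j, μ₀ ≤ μ j)
    (hcard : ∀ x : ℝ, μ₀ ≤ x → ({j : ℕ | μ j ≤ x}).Finite ∧
      ((({j : ℕ | μ j ≤ x}).ncard : ℝ)) ≤ c₂ * x ^ n)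
    (g : ℝ → ℝ) (hg0 : ∀ x, μ₀ / 2 ≤ x → 0 ≤ g x)
    (hganti : ∀ x y, μ₀ / 2 ≤ x → x ≤ y → g y ≤ g x)
    (G : ℝ) (hG : ∀ K : ℕ, ∑ k ∈ Finset.range K, (2:ℝ) ^ (k * n) * g (μ₀ * 2 ^ k / 2) ≤ G) :
    ∀ F : Finset ℕ, ∑ j ∈ F, g (μ j) ≤ c₂ * μ₀ ^ n * G := by
  have hc₂ : 0 ≤ c₂ := by
    have h := (hcard μ₀ le_rfl).2
    have h0 : (0:ℝ) ≤ (({j : ℕ | μ j ≤ μ₀}).ncard : ℝ) := Nat.cast_nonneg _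
    nlinarith [pow_pos hμ₀ n]
  intro F
  have ex : ∀ j, ∃ k : ℕ, μ j ≤ μ₀ * 2 ^ k := by
    intro j
    obtain ⟨k, hk⟩ := pow_unbounded_of_one_lt (μ j / μ₀) (by norm_num : (1:ℝ) < 2)
    exact ⟨k, by rw [div_lt_iff₀ hμ₀] at hk; linarith [hk]⟩
  set kIdx : ℕ → ℕ := fun j => Nat.find (ex j) with hkIdx
  have hk1 : ∀ j, μ j ≤ μ₀ * 2 ^ (kIdx j) := fun j => Nat.find_spec (ex j)
  have hk2 : ∀ j, μ₀ * 2 ^ (kIdx j) / 2 ≤ μ j := by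
    intro j
    rcases Nat.eq_zero_or_pos (kIdx j) with h0 | hpos
    · rw [h0]; simp only [pow_zero, mul_one]; linarith [hμ j]
    · obtain ⟨k', hk'⟩ := Nat.exists_eq_succ_of_ne_zero hpos.ne'
      have hlt : k' < kIdx j := hk' ▸ Nat.lt_succ_self k'
      have hmin := Nat.find_min (ex j) hlt
      push_neg at hmin
      rw [hk']
      have : μ₀ * 2 ^ (k' + 1) / 2 = μ₀ * 2 ^ k' := by ring
      rw [this]
      exact hmin.le
  have hhalf : ∀ k : ℕ, μ₀ / 2 ≤ μ₀ * 2 ^ k / 2 := by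
    intro k
    have : (1:ℝ) ≤ 2 ^ k := one_le_pow₀ (by norm_num) (n:=k)
    rw [div_le_div_iff₀ (by norm_num) (by norm_num)]
    nlinarith
  set K : ℕ := F.sup kIdx + 1 with hK
  have hmaps : ∀ j ∈ F, kIdx j ∈ F.image kIdx := fun j hj => Finset.mem_image_of_mem _ hj
  calc ∑ j ∈ F, g (μ j)
      = ∑ k ∈ F.image kIdx, ∑ j ∈ F.filter (fun j => kIdx j = k), g (μ j) :=
        (Finset.sum_fiberwise_of_maps_to hmaps _).symm
    _ ≤ ∑ k ∈ F.image kIdx, c₂ * μ₀ ^ n * ((2:ℝ) ^ (k * n) * g (μ₀ * 2 ^ k / 2)) := by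
        apply Finset.sum_le_sum
        intro k hk
        have hx : μ₀ ≤ μ₀ * 2 ^ k := by
          nlinarith [one_le_pow₀ (by norm_num : (1:ℝ) ≤ 2) (n:=k)]
        obtain ⟨hfin, hcd⟩ := hcard (μ₀ * 2 ^ k) hx
        have hsub : ((F.filter (fun j => kIdx j = k)) : Set ℕ) ⊆ {j : ℕ | μ j ≤ μ₀ * 2 ^ k} := by
          intro j hj
          simp only [Finset.coe_filter, Set.mem_setOf_eq] at hj
          obtain ⟨_, hjk⟩ := hj
          simpa [hjk] using hk1 j
        have hcardle : ((F.filter (fun j => kIdx j = k)).card : ℝ) ≤ c₂ * (μ₀ * 2 ^ k) ^ n := by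
          have := Set.ncard_le_ncard hsub hfin
          rw [Set.ncard_coe_finset] at this
          exact le_trans (Nat.cast_le.mpr this) hcd
        have hbound : ∀ j ∈ F.filter (fun j => kIdx j = k), g (μ j) ≤ g (μ₀ * 2 ^ k / 2) := by
          intro j hj
          simp only [Finset.mem_filter] at hj
          apply hganti (μ₀ * 2 ^ k / 2) (μ j) (hhalf k)
          rw [← hj.2]; exact hk2 j
        calc ∑ j ∈ F.filter (fun j => kIdx j = k), g (μ j)
            ≤ (F.filter (fun j => kIdx j = k)).card • g (μ₀ * 2 ^ k / 2) :=
              Finset.sum_le_card_nsmul _ _ _ hbound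
          _ = ((F.filter (fun j => kIdx j = k)).card : ℝ) * g (μ₀ * 2 ^ k / 2) := by
              rw [nsmul_eq_mul]
          _ ≤ (c₂ * (μ₀ * 2 ^ k) ^ n) * g (μ₀ * 2 ^ k / 2) :=
              mul_le_mul_of_nonneg_right hcardle (hg0 _ (hhalf k))
          _ = c₂ * μ₀ ^ n * ((2:ℝ) ^ (k * n) * g (μ₀ * 2 ^ k / 2)) := by
              rw [mul_pow, pow_mul]; ring
    _ ≤ ∑ k ∈ Finset.range K, c₂ * μ₀ ^ n * ((2:ℝ) ^ (k * n) * g (μ₀ * 2 ^ k / 2)) := by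
        apply Finset.sum_le_sum_of_subset_of_nonneg
        · intro k hk
          simp only [Finset.mem_image] at hk
          obtain ⟨j, hj, rfl⟩ := hk
          exact Finset.mem_range.mpr (Nat.lt_succ_of_le (Finset.le_sup hj))
        · intro k _ _
          have := hg0 (μ₀ * 2 ^ k / 2) (hhalf k)
          positivity
    _ = c₂ * μ₀ ^ n * ∑ k ∈ Finset.range K, (2:ℝ) ^ (k * n) * g (μ₀ * 2 ^ k / 2) := by
        rw [Finset.mul_sum]
    _ ≤ c₂ * μ₀ ^ n * G := by
        apply mul_le_mul_of_nonneg_left (hG K)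
        positivity

lemma rewrite_shell_arg (μ₀ : ℝ) (k : ℕ) : μ₀ * 2 ^ k / 2 = (μ₀ / 2) * 2 ^ k := by ring

lemma half_pos' {μ₀ : ℝ} (hμ₀ : 0 < μ₀) : 0 < μ₀ / 2 := by linarith

lemma cor_pow (n : ℕ) (μ : ℕ → ℝ) (μ₀ c₂ : ℝ) (hμ₀ : 0 < μ₀) (hμ : ∀ j, μ₀ ≤ μ j)
    (hcard : ∀ x : ℝ, μ₀ ≤ x → ({j : ℕ | μ j ≤ x}).Finite ∧
      ((({j : ℕ | μ j ≤ x}).ncard : ℝ)) ≤ c₂ * x ^ n)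
    (ε : ℝ) (hε : (n:ℝ) < ε) :
    ∃ Z : ℝ, 0 ≤ Z ∧ ∀ F : Finset ℕ, ∑ j ∈ F, (μ j) ^ (-ε) ≤ Z := by
  set r : ℝ := (2:ℝ) ^ ((n:ℝ) - ε) with hr
  have hr0 : 0 ≤ r := Real.rpow_nonneg (by norm_num) _
  have hr1 : r < 1 := Real.rpow_lt_one_of_one_lt_of_neg (by norm_num) (by linarith)
  set G : ℝ := (μ₀ / 2) ^ (-ε) * (1 - r)⁻¹ with hGdef
  have hG0 : 0 ≤ G := by
    apply mul_nonneg (Real.rpow_nonneg (by linarith) _)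
    rw [inv_nonneg]; linarith
  refine ⟨c₂ * μ₀ ^ n * G, ?_, ?_⟩
  · have h := (hcard μ₀ le_rfl).2
    have h0 : (0:ℝ) ≤ (({j : ℕ | μ j ≤ μ₀}).ncard : ℝ) := Nat.cast_nonneg _
    have hc₂ : 0 ≤ c₂ := by nlinarith [pow_pos hμ₀ n]
    positivity
  · apply shell_bound n μ μ₀ c₂ hμ₀ hμ hcard _
      (fun x hx => Real.rpow_nonneg (by linarith) _)
      (fun x y hx hxy => Real.rpow_le_rpow_of_nonpos (by linarith) hxy (by linarith))
    intro K
    have hterm : ∀ k : ℕ, (2:ℝ) ^ (k * n) * (μ₀ * 2 ^ k / 2) ^ (-ε)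
        = (μ₀ / 2) ^ (-ε) * r ^ k := by
      intro k
      rw [rewrite_shell_arg, Real.mul_rpow (by linarith) (by positivity)]
      have h1 : ((2:ℝ) ^ k) ^ (-ε) = (2:ℝ) ^ ((k:ℝ) * (-ε)) := by
        rw [← Real.rpow_natCast 2 k, ← Real.rpow_mul (by norm_num)]
      have h2 : ((2:ℝ) ^ (k * n) : ℝ) = (2:ℝ) ^ ((k:ℝ) * (n:ℝ)) := by
        rw [← Real.rpow_natCast 2 (k * n)]
        push_cast
        ring_nf
      have h3 : r ^ k = (2:ℝ) ^ (((n:ℝ) - ε) * (k:ℝ)) := by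
        rw [hr, ← Real.rpow_natCast r k, ← Real.rpow_mul (by norm_num)]
      rw [h1, h2, h3,
        show ((n:ℝ) - ε) * (k:ℝ) = (k:ℝ) * (n:ℝ) + (k:ℝ) * (-ε) by ring,
        Real.rpow_add (by norm_num : (0:ℝ) < 2)]
      ring
    calc ∑ k ∈ Finset.range K, (2:ℝ) ^ (k * n) * (μ₀ * 2 ^ k / 2) ^ (-ε)
        = ∑ k ∈ Finset.range K, (μ₀ / 2) ^ (-ε) * r ^ k := by
          apply Finset.sum_congr rfl; intro k _; exact hterm k
      _ = (μ₀ / 2) ^ (-ε) * ∑ k ∈ Finset.range K, r ^ k := by rw [Finset.mul_sum]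
      _ ≤ (μ₀ / 2) ^ (-ε) * (1 - r)⁻¹ := by
          apply mul_le_mul_of_nonneg_left _ (Real.rpow_nonneg (by linarith) _)
          calc ∑ k ∈ Finset.range K, r ^ k
              ≤ ∑' k : ℕ, r ^ k :=
                Summable.sum_le_tsum _ (fun k _ => pow_nonneg hr0 k) (summable_geometric_of_lt_one hr0 hr1)
            _ = (1 - r)⁻¹ := tsum_geometric_of_lt_one hr0 hr1
      _ = G := rfl

lemma pow_div_fact_le_exp {x : ℝ} (hx : 0 ≤ x) (p : ℕ) : x ^ p / (Nat.factorial p) ≤ Real.exp x := by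
  calc x ^ p / (Nat.factorial p) ≤ ∑ i ∈ Finset.range (p + 1), x ^ i / (Nat.factorial i) := by
        apply Finset.single_le_sum (f := fun i => x ^ i / ((Nat.factorial i) : ℝ))
        · intro i _; positivity
        · exact Finset.self_mem_range_succ p
    _ ≤ Real.exp x := Real.sum_le_exp_of_nonneg hx _

lemma cor_exp (n : ℕ) (μ : ℕ → ℝ) (μ₀ c₂ : ℝ) (hμ₀ : 0 < μ₀) (hμ : ∀ j, μ₀ ≤ μ j)
    (hcard : ∀ x : ℝ, μ₀ ≤ x → ({j : ℕ | μ j ≤ x}).Finite ∧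
      ((({j : ℕ | μ j ≤ x}).ncard : ℝ)) ≤ c₂ * x ^ n)
    (θ δ : ℝ) (hθ : 0 < θ) (hδ : 0 < δ) :
    ∃ A : ℝ, 0 ≤ A ∧ ∀ F : Finset ℕ, ∑ j ∈ F, Real.exp (-(θ * μ j ^ δ)) ≤ A := by
  set q : ℝ := (2:ℝ) ^ δ with hq
  have hq1 : 1 < q := by
    rw [hq, show (1:ℝ) = (2:ℝ) ^ (0:ℝ) by rw [Real.rpow_zero]]
    exact Real.rpow_lt_rpow_of_exponent_lt (by norm_num) hδ
  have hq0 : 0 < q := lt_trans one_pos hq1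
  set c : ℝ := θ * (μ₀ / 2) ^ δ with hc
  have hc0 : 0 < c := by
    apply mul_pos hθ (Real.rpow_pos_of_pos (by linarith) _)
  obtain ⟨p, hp⟩ := pow_unbounded_of_one_lt ((2:ℝ) ^ (n + 1)) hq1
  set M : ℝ := ((Nat.factorial p) : ℝ) / c ^ p with hM
  have hM0 : 0 < M := by positivity
  set G : ℝ := M * 2 with hGdef
  refine ⟨c₂ * μ₀ ^ n * G, ?_, ?_⟩
  · have h := (hcard μ₀ le_rfl).2
    have h0 : (0:ℝ) ≤ (({j : ℕ | μ j ≤ μ₀}).ncard : ℝ) := Nat.cast_nonneg _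
    have hc₂ : 0 ≤ c₂ := by nlinarith [pow_pos hμ₀ n]
    have : 0 ≤ G := by positivity
    positivity
  · apply shell_bound n μ μ₀ c₂ hμ₀ hμ hcard (fun x => Real.exp (-(θ * x ^ δ)))
      (fun x _ => (Real.exp_pos _).le)
      (fun x y hx hxy => by
        apply Real.exp_le_exp.mpr
        rw [neg_le_neg_iff]
        exact mul_le_mul_of_nonneg_left
          (Real.rpow_le_rpow (by linarith) hxy hδ.le) hθ.le)
    intro K
    have hterm : ∀ k : ℕ, (2:ℝ) ^ (k * n) * Real.exp (-(θ * (μ₀ * 2 ^ k / 2) ^ δ))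
        ≤ M * (1/2) ^ k := by
      intro k
      have harg : θ * (μ₀ * 2 ^ k / 2) ^ δ = c * q ^ k := by
        rw [rewrite_shell_arg, Real.mul_rpow (by linarith) (by positivity), hc]
        have h1 : ((2:ℝ) ^ k) ^ δ = q ^ k := by
          rw [← Real.rpow_natCast 2 k, ← Real.rpow_mul (by norm_num), hq,
            ← Real.rpow_natCast ((2:ℝ) ^ δ) k, ← Real.rpow_mul (by norm_num), mul_comm]
        rw [h1]; ring
      rw [harg]
      have hcq : 0 < c * q ^ k := by positivity
      have hexp : Real.exp (-(c * q ^ k)) ≤ ((Nat.factorial p) : ℝ) / (c * q ^ k) ^ p := by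
        rw [Real.exp_neg]
        have h := pow_div_fact_le_exp hcq.le p
        have h2 : (Real.exp (c * q ^ k))⁻¹ ≤ ((c * q ^ k) ^ p / ((Nat.factorial p) : ℝ))⁻¹ := by
          apply inv_anti₀ (by positivity) h
        rwa [inv_div] at h2
      have hqp : ((2:ℝ) ^ (n+1)) ^ k ≤ (q ^ p) ^ k :=
        pow_le_pow_left₀ (by positivity) hp.le k
      calc (2:ℝ) ^ (k * n) * Real.exp (-(c * q ^ k))
          ≤ (2:ℝ) ^ (k * n) * (((Nat.factorial p) : ℝ) / (c * q ^ k) ^ p) :=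
            mul_le_mul_of_nonneg_left hexp (by positivity)
        _ ≤ (2:ℝ) ^ (k * n) * (((Nat.factorial p) : ℝ) / (c ^ p * ((2:ℝ) ^ (n+1)) ^ k)) := by
            apply mul_le_mul_of_nonneg_left _ (by positivity)
            rw [mul_pow, ← pow_mul, mul_comm k p, pow_mul]
            exact div_le_div_of_nonneg_left (by positivity) (by positivity)
              (mul_le_mul_of_nonneg_left hqp (by positivity))
        _ = M * (1/2) ^ k := by
            rw [← pow_mul, show (n+1) * k = k * n + k by ring, pow_add, hM]
            have h1 : (0:ℝ) < 2 ^ (k * n) := by positivity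
            have h2 : (0:ℝ) < 2 ^ k := by positivity
            have h3 : (0:ℝ) < c ^ p := by positivity
            field_simp
            ring_nf; rw [← mul_pow]; norm_num
    calc ∑ k ∈ Finset.range K, (2:ℝ) ^ (k * n) * Real.exp (-(θ * (μ₀ * 2 ^ k / 2) ^ δ))
        ≤ ∑ k ∈ Finset.range K, M * (1/2) ^ k := Finset.sum_le_sum (fun k _ => hterm k)
      _ = M * ∑ k ∈ Finset.range K, (1/(2:ℝ)) ^ k := by rw [Finset.mul_sum]
      _ ≤ M * 2 := mul_le_mul_of_nonneg_left (sum_geometric_two_le K) hM0.le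
      _ = G := rfl

end Aux

set_option maxHeartbeats 1000000 in
/-- Let `α_j ∼ N(0, (h^m σ_j)²)` be independent complex Gaussians with
`σ_j ≤ C μ_j^{-ρ}`, `μ_j ≥ μ₀ > 0`, counting function `N(x) ≍ x^n`, and
`n/2 < s < ρ - n/2`.  Then there is `C' > 0` independent of `h ∈ (0,1]` such that
`P(∑_j μ_j^{2s}|α_j|² ≥ h²) ≤ exp(C' - h^{-2(m-1)}/(2C'))`. -/
theorem hs_norm_perturbation_probability
    (n m : ℕ) (hn : 0 < n) (hm : 2 ≤ m) (s ρ μ₀ C : ℝ) (hμ₀ : 0 < μ₀)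
    (hs : (n : ℝ) / 2 < s) (hsρ : s < ρ - n / 2)
    (μ : ℕ → ℝ) (hμ : ∀ j, μ₀ ≤ μ j)
    (σ : ℕ → ℝ≥0) (hσ : ∀ j, (σ j : ℝ) ≤ C * μ j ^ (-ρ))
    (hcount : ∃ c₁ c₂ : ℝ, 0 < c₁ ∧ ∀ x : ℝ, μ₀ ≤ x →
      ({j : ℕ | μ j ≤ x}).Finite ∧
      c₁ * x ^ n ≤ (({j : ℕ | μ j ≤ x}).ncard : ℝ) ∧
      (({j : ℕ | μ j ≤ x}).ncard : ℝ) ≤ c₂ * x ^ n) :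
    ∃ C' : ℝ, 0 < C' ∧
      ∀ h ∈ Ioc (0 : ℝ) 1,
      ∀ (Ω : Type) (_ : MeasurableSpace Ω) (P : Measure Ω), IsProbabilityMeasure P →
      ∀ α : ℕ → Ω → ℂ,
        IsIndepComplexGaussianFamily P α (fun j => Real.toNNReal (h ^ m) * σ j) →
        (P {ω | h ^ 2 ≤ ∑' j, μ j ^ (2 * s) * ‖α j ω‖ ^ 2}).toReal ≤
          Real.exp (C' - h ^ (-(2 : ℝ) * (m - 1)) / (2 * C')) := by
  obtain ⟨c₁, c₂, hc₁, hcount'⟩ := hcount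
  have hcard : ∀ x : ℝ, μ₀ ≤ x → ({j : ℕ | μ j ≤ x}).Finite ∧
      ((({j : ℕ | μ j ≤ x}).ncard : ℝ)) ≤ c₂ * x ^ n :=
    fun x hx => ⟨(hcount' x hx).1, (hcount' x hx).2.2⟩
  have hμpos : ∀ j, 0 < μ j := fun j => lt_of_lt_of_le hμ₀ (hμ j)
  -- exponents
  set δ : ℝ := ρ - s - n / 2 with hδdef
  set ε : ℝ := ρ - s + n / 2 with hεdef
  have hδ : 0 < δ := by rw [hδdef]; linarith
  have hε : (n : ℝ) < ε := by rw [hεdef]; push_cast; linarith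
  obtain ⟨Z, hZ0, hZ⟩ := cor_pow n μ μ₀ c₂ hμ₀ hμ hcard ε hε
  set C₁ : ℝ := C + 1 with hC₁def
  have hC : 0 ≤ C := by
    have h1 := hσ 0
    have h2 : (0:ℝ) < μ 0 ^ (-ρ) := Real.rpow_pos_of_pos (hμpos 0) _
    nlinarith [(σ 0).coe_nonneg]
  have hC₁ : 0 < C₁ := by rw [hC₁def]; linarith
  have hσ' : ∀ j, (σ j : ℝ) ≤ C₁ * μ j ^ (-ρ) := by
    intro j
    have h2 : (0:ℝ) ≤ μ j ^ (-ρ) := (Real.rpow_pos_of_pos (hμpos j) _).le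
    calc (σ j : ℝ) ≤ C * μ j ^ (-ρ) := hσ j
      _ ≤ C₁ * μ j ^ (-ρ) := by rw [hC₁def]; nlinarith
  set θ : ℝ := 1 / (8 * (Z + 1) * C₁ ^ 2) with hθdef
  have hθ : 0 < θ := by rw [hθdef]; positivity
  obtain ⟨A, hA0, hA⟩ := cor_exp n μ μ₀ c₂ hμ₀ hμ hcard θ δ hθ hδ
  set β : ℝ := θ * μ₀ ^ δ with hβdef
  have hβ : 0 < β := by
    rw [hβdef]; exact mul_pos hθ (Real.rpow_pos_of_pos hμ₀ _)
  set D : ℝ := 2 * Real.sqrt 2 * Real.exp β * (A + 1) with hDdef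
  have hD : 0 < D := by
    rw [hDdef]
    have : (0:ℝ) < Real.sqrt 2 := Real.sqrt_pos.mpr (by norm_num)
    positivity
  refine ⟨max (Real.log D) (1 / (2 * β)) + 1, ?_, ?_⟩
  · have : 0 < 1 / (2 * β) := by positivity
    have := le_max_right (Real.log D) (1 / (2 * β))
    linarith
  intro h hh Ω mΩ P hPprob α hα
  set C' : ℝ := max (Real.log D) (1 / (2 * β)) + 1 with hC'def
  have hC'log : Real.log D ≤ C' := by
    have := le_max_left (Real.log D) (1 / (2 * β)); rw [hC'def]; linarith
  have hC'β : 1 / (2 * β) ≤ C' := by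
    have := le_max_right (Real.log D) (1 / (2 * β)); rw [hC'def]; linarith
  have hC' : 0 < C' := lt_of_lt_of_le (by positivity) hC'β
  obtain ⟨hh0, hh1⟩ := hh
  obtain ⟨hind, hdist⟩ := hα
  set t : ℝ := h ^ (-(2 : ℝ) * ((m:ℝ) - 1)) with htdef
  have hm1 : (1:ℝ) ≤ (m:ℝ) := by exact_mod_cast Nat.one_le_of_lt hm
  have ht1 : 1 ≤ t := by
    rw [htdef]
    apply Real.one_le_rpow_of_pos_of_le_one_of_nonpos hh0 hh1
    nlinarith
  have ht0 : 0 < t := lt_of_lt_of_le one_pos ht1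
  -- weights
  set c : ℕ → ℝ := fun j => μ j ^ (-ε) / (2 * (Z + 1)) with hcdef
  have hcpos : ∀ j, 0 < c j := by
    intro j
    rw [hcdef]
    exact div_pos (Real.rpow_pos_of_pos (hμpos j) _) (by linarith)
  -- target sets
  set S : ℕ → Set ℂ := fun j => {z : ℂ | c j * h ^ 2 ≤ μ j ^ (2 * s) * ‖z‖ ^ 2} with hSdef
  -- summability of weights
  have hsum_pow : Summable (fun j => μ j ^ (-ε)) :=
    summable_of_sum_range_le (fun j => (Real.rpow_pos_of_pos (hμpos j) _).le)
      (fun k => hZ (Finset.range k))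
  have hsum_c : Summable (fun j => c j * h ^ 2) := by
    rw [hcdef]
    simpa only [div_eq_mul_inv] using ((hsum_pow.mul_right _).mul_right _)
  have htsum_c : ∑' j, c j * h ^ 2 ≤ h ^ 2 / 2 := by
    have hF : ∀ k : ℕ, ∑ j ∈ Finset.range k, c j * h ^ 2 ≤ h ^ 2 / 2 := by
      intro k
      have h1 : ∑ j ∈ Finset.range k, c j * h ^ 2
          = (∑ j ∈ Finset.range k, μ j ^ (-ε)) * (h ^ 2 / (2 * (Z + 1))) := by
        rw [Finset.sum_mul]
        apply Finset.sum_congr rfl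
        intro j _
        rw [hcdef]
        ring
      rw [h1]
      have h2 : (∑ j ∈ Finset.range k, μ j ^ (-ε)) * (h ^ 2 / (2 * (Z + 1)))
          ≤ Z * (h ^ 2 / (2 * (Z + 1))) :=
        mul_le_mul_of_nonneg_right (hZ _) (by positivity)
      have h3 : Z * (h ^ 2 / (2 * (Z + 1))) ≤ h ^ 2 / 2 := by
        rw [← mul_div_assoc, div_le_div_iff₀ (by positivity) (by norm_num)]
        nlinarith [sq_nonneg h]
      linarith
    exact Real.tsum_le_of_sum_range_le (fun j => (mul_pos (hcpos j) (by positivity)).le) hF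
  -- event inclusion
  have hEv : {ω | h ^ 2 ≤ ∑' j, μ j ^ (2 * s) * ‖α j ω‖ ^ 2} ⊆ ⋃ j, α j ⁻¹' S j := by
    intro ω hω
    simp only [Set.mem_setOf_eq] at hω
    by_contra hno
    simp only [Set.mem_iUnion, Set.mem_preimage, not_exists] at hno
    have hlt : ∀ j, μ j ^ (2 * s) * ‖α j ω‖ ^ 2 < c j * h ^ 2 := by
      intro j
      have := hno j
      rw [hSdef] at this
      simp only [Set.mem_setOf_eq, not_le] at this
      exact this
    by_cases hsf : Summable (fun j => μ j ^ (2 * s) * ‖α j ω‖ ^ 2)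
    · have hle := Summable.tsum_le_tsum (fun j => (hlt j).le) hsf hsum_c
      have : (0:ℝ) < h ^ 2 := by positivity
      linarith
    · rw [tsum_eq_zero_of_not_summable hsf] at hω
      nlinarith
  -- measurability facts
  have hSmeas : ∀ j, MeasurableSet (S j) := by
    intro j
    rw [hSdef]
    exact (isClosed_le continuous_const
      (continuous_const.mul ((continuous_norm).pow 2))).measurableSet
  have haem : ∀ j, AEMeasurable (α j) P := by
    intro j
    by_contra hna
    have h0 : Measure.map (α j) P = 0 := Measure.map_of_not_aemeasurable hna
    have h1 := hdist j
    rw [h0] at h1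
    have h2 : (complexGaussian (((h ^ m).toNNReal * σ j) ^ 2)) Set.univ = 1 :=
      (complexGaussian_isProb _).measure_univ
    rw [← h1] at h2
    simp at h2
  -- per-j bound
  have hperj : ∀ j, P (α j ⁻¹' S j) ≤
      ENNReal.ofReal (2 * Real.sqrt 2 * Real.exp (-(θ * μ j ^ δ * t))) := by
    intro j
    have hmap : P (α j ⁻¹' S j) = complexGaussian (((h ^ m).toNNReal * σ j) ^ 2) (S j) := by
      rw [← hdist j, Measure.map_apply_of_aemeasurable (haem j) (hSmeas j)]
    set u : ℝ := c j * h ^ 2 * μ j ^ (-(2 * s)) with hudef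
    have hu0 : 0 < u := by
      rw [hudef]
      exact mul_pos (mul_pos (hcpos j) (by positivity)) (Real.rpow_pos_of_pos (hμpos j) _)
    have hid : μ j ^ (-(2 * s)) * μ j ^ (2 * s) = 1 := by
      rw [← Real.rpow_add (hμpos j)]; simp
    have hsub : S j ⊆ {z : ℂ | u ≤ ‖z‖ ^ 2} := by
      intro z hz
      rw [hSdef] at hz
      simp only [Set.mem_setOf_eq] at hz ⊢
      have hpos : (0:ℝ) ≤ μ j ^ (-(2 * s)) := (Real.rpow_pos_of_pos (hμpos j) _).le
      calc u = μ j ^ (-(2 * s)) * (c j * h ^ 2) := by rw [hudef]; ring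
        _ ≤ μ j ^ (-(2 * s)) * (μ j ^ (2 * s) * ‖z‖ ^ 2) := mul_le_mul_of_nonneg_left hz hpos
        _ = (μ j ^ (-(2 * s)) * μ j ^ (2 * s)) * ‖z‖ ^ 2 := by ring
        _ = ‖z‖ ^ 2 := by rw [hid, one_mul]
    rcases eq_or_ne (σ j) 0 with hσ0 | hσ0
    · have hv : ((h ^ m).toNNReal * σ j) ^ 2 = 0 := by rw [hσ0, mul_zero]; simp
      rw [hmap, hv]
      calc complexGaussian 0 (S j) ≤ complexGaussian 0 {z : ℂ | u ≤ ‖z‖ ^ 2} :=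
            measure_mono hsub
        _ = 0 := complexGaussian_zero_tail u hu0
        _ ≤ _ := zero_le
    · have hσpos : (0:ℝ) < (σ j : ℝ) := NNReal.coe_pos.mpr (pos_iff_ne_zero.mpr hσ0)
      have hvr : ((((h ^ m).toNNReal * σ j) ^ 2 : ℝ≥0) : ℝ) = (h ^ m * (σ j : ℝ)) ^ 2 := by
        push_cast [Real.coe_toNNReal _ (by positivity : (0:ℝ) ≤ h ^ m)]
        ring
      have hZ1 : Z + 1 ≠ 0 := by positivity
      have hC₁' : C₁ ≠ 0 := hC₁.ne'
      have id1 : μ j ^ δ * (μ j ^ (-ρ)) ^ 2 = μ j ^ (-ε) * μ j ^ (-(2 * s)) := by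
        rw [sq, ← Real.rpow_add (hμpos j), ← Real.rpow_add (hμpos j), ← Real.rpow_add (hμpos j)]
        congr 1
        rw [hδdef, hεdef]; ring
      have id2 : t * (h ^ m) ^ 2 = h ^ 2 := by
        have e1 : (h ^ m) ^ 2 = h ^ (((m * 2 : ℕ)) : ℝ) := by
          rw [← pow_mul, Real.rpow_natCast]
        rw [e1, htdef, ← Real.rpow_add hh0,
          show -(2:ℝ) * ((m:ℝ) - 1) + ((m * 2 : ℕ) : ℝ) = ((2:ℕ):ℝ) by push_cast; ring,
          Real.rpow_natCast]
      have hexp : θ * μ j ^ δ * t ≤ u / (4 * ((h ^ m * (σ j : ℝ)) ^ 2)) := by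
        rw [le_div_iff₀ (by positivity)]
        calc θ * μ j ^ δ * t * (4 * (h ^ m * (σ j : ℝ)) ^ 2)
            ≤ θ * μ j ^ δ * t * (4 * (h ^ m * (C₁ * μ j ^ (-ρ))) ^ 2) := by
              apply mul_le_mul_of_nonneg_left _
                (mul_nonneg (mul_nonneg hθ.le (Real.rpow_pos_of_pos (hμpos j) δ).le) ht0.le)
              have h1 : h ^ m * (σ j : ℝ) ≤ h ^ m * (C₁ * μ j ^ (-ρ)) :=
                mul_le_mul_of_nonneg_left (hσ' j) (by positivity)
              have h2 : (0:ℝ) ≤ h ^ m * (σ j : ℝ) := by positivity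
              have h3 := pow_le_pow_left₀ h2 h1 2
              linarith
          _ = u := by
              rw [show θ * μ j ^ δ * t * (4 * (h ^ m * (C₁ * μ j ^ (-ρ))) ^ 2)
                  = (4 * θ * C₁ ^ 2) * ((μ j ^ δ * (μ j ^ (-ρ)) ^ 2) * (t * (h ^ m) ^ 2)) by ring,
                id1, id2, hudef]
              simp only [hcdef, hθdef]
              field_simp
              ring
      have hexp2 : Real.exp (-(u / (4 * ((((h ^ m).toNNReal * σ j) ^ 2 : ℝ≥0) : ℝ))))
          ≤ Real.exp (-(θ * μ j ^ δ * t)) := by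
        rw [hvr]
        exact Real.exp_le_exp.mpr (neg_le_neg hexp)
      calc P (α j ⁻¹' S j) = complexGaussian (((h ^ m).toNNReal * σ j) ^ 2) (S j) := hmap
        _ ≤ complexGaussian (((h ^ m).toNNReal * σ j) ^ 2) {z : ℂ | u ≤ ‖z‖ ^ 2} :=
            measure_mono hsub
        _ ≤ ENNReal.ofReal (2 * Real.sqrt 2 *
            Real.exp (-(u / (4 * ((((h ^ m).toNNReal * σ j) ^ 2 : ℝ≥0) : ℝ))))) :=
            complexGaussian_tail _ u
        _ ≤ ENNReal.ofReal (2 * Real.sqrt 2 * Real.exp (-(θ * μ j ^ δ * t))) := by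
            apply ENNReal.ofReal_le_ofReal
            apply mul_le_mul_of_nonneg_left hexp2
            positivity
  -- term comparison for the tail sum
  have hterm2 : ∀ j, 2 * Real.sqrt 2 * Real.exp (-(θ * μ j ^ δ * t))
      ≤ (2 * Real.sqrt 2 * Real.exp β * Real.exp (-(β * t))) * Real.exp (-(θ * μ j ^ δ)) := by
    intro j
    have hmono : μ₀ ^ δ ≤ μ j ^ δ := Real.rpow_le_rpow hμ₀.le (hμ j) hδ.le
    have hkey : -(θ * μ j ^ δ * t) ≤ β - β * t - θ * μ j ^ δ := by
      rw [hβdef]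
      nlinarith [mul_nonneg (mul_nonneg hθ.le (sub_nonneg.mpr hmono)) (sub_nonneg.mpr ht1)]
    calc 2 * Real.sqrt 2 * Real.exp (-(θ * μ j ^ δ * t))
        ≤ 2 * Real.sqrt 2 * Real.exp (β - β * t - θ * μ j ^ δ) :=
          mul_le_mul_of_nonneg_left (Real.exp_le_exp.mpr hkey) (by positivity)
      _ = (2 * Real.sqrt 2 * Real.exp β * Real.exp (-(β * t))) * Real.exp (-(θ * μ j ^ δ)) := by
          rw [show β - β * t - θ * μ j ^ δ = β + (-(β * t)) + (-(θ * μ j ^ δ)) by ring,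
            Real.exp_add, Real.exp_add]
          ring
  -- tsum of exponential weights
  have htsum_exp : ∑' j, ENNReal.ofReal (Real.exp (-(θ * μ j ^ δ))) ≤ ENNReal.ofReal (A + 1) := by
    rw [ENNReal.tsum_eq_iSup_sum]
    apply iSup_le
    intro F
    rw [← ENNReal.ofReal_sum_of_nonneg (fun j _ => Real.exp_nonneg _)]
    exact ENNReal.ofReal_le_ofReal (le_trans (hA F) (by linarith))
  -- the main estimate
  have hfinal : P {ω | h ^ 2 ≤ ∑' j, μ j ^ (2 * s) * ‖α j ω‖ ^ 2}
      ≤ ENNReal.ofReal (D * Real.exp (-(β * t))) := by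
    calc P {ω | h ^ 2 ≤ ∑' j, μ j ^ (2 * s) * ‖α j ω‖ ^ 2}
        ≤ P (⋃ j, α j ⁻¹' S j) := measure_mono hEv
      _ ≤ ∑' j, P (α j ⁻¹' S j) := measure_iUnion_le _
      _ ≤ ∑' j, ENNReal.ofReal (2 * Real.sqrt 2 * Real.exp (-(θ * μ j ^ δ * t))) :=
          ENNReal.tsum_le_tsum (fun j => hperj j)
      _ ≤ ∑' j, ENNReal.ofReal ((2 * Real.sqrt 2 * Real.exp β * Real.exp (-(β * t)))
            * Real.exp (-(θ * μ j ^ δ))) :=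
          ENNReal.tsum_le_tsum (fun j => ENNReal.ofReal_le_ofReal (hterm2 j))
      _ = ∑' j, ENNReal.ofReal (2 * Real.sqrt 2 * Real.exp β * Real.exp (-(β * t)))
            * ENNReal.ofReal (Real.exp (-(θ * μ j ^ δ))) := by
          congr 1
          funext j
          rw [ENNReal.ofReal_mul (by positivity)]
      _ = ENNReal.ofReal (2 * Real.sqrt 2 * Real.exp β * Real.exp (-(β * t)))
            * ∑' j, ENNReal.ofReal (Real.exp (-(θ * μ j ^ δ))) := ENNReal.tsum_mul_left
      _ ≤ ENNReal.ofReal (2 * Real.sqrt 2 * Real.exp β * Real.exp (-(β * t)))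
            * ENNReal.ofReal (A + 1) := mul_le_mul_right htsum_exp _
      _ = ENNReal.ofReal (D * Real.exp (-(β * t))) := by
          rw [← ENNReal.ofReal_mul (by positivity), hDdef]
          ring_nf
  -- real comparison
  have hreal : D * Real.exp (-(β * t)) ≤ Real.exp (C' - t / (2 * C')) := by
    have h1 : D * Real.exp (-(β * t)) = Real.exp (Real.log D + (-(β * t))) := by
      rw [Real.exp_add, Real.exp_log hD]
    have h2 : 1 / (2 * C') ≤ β := by
      rw [div_le_iff₀ (by positivity)]
      rw [div_le_iff₀ (by positivity)] at hC'β
      nlinarith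
    have h3 : t / (2 * C') ≤ β * t := by
      rw [div_eq_mul_one_div t]
      calc t * (1 / (2 * C')) ≤ t * β := mul_le_mul_of_nonneg_left h2 ht0.le
        _ = β * t := mul_comm _ _
    rw [h1]
    apply Real.exp_le_exp.mpr
    rw [sub_eq_add_neg]
    exact add_le_add hC'log (neg_le_neg h3)
  exact ENNReal.toReal_le_of_le_ofReal (Real.exp_nonneg _)
    (le_trans hfinal (ENNReal.ofReal_le_ofReal hreal))
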